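/- Let g be the probability mass function of a sum of m independent Bernoulli random variables. Then for every integer k: g_k²·g_{k+1} − 2·g_{k+1}²·g_{k-1} + g_{k+2}·g_k·g_{k-1} ≥ 0. -/

import Mathlib

open Finset

/-- Probability mass function of a sum of independent Bernoulli random variables
indexed by the finite set `I`, with parameters `p i`. -/
def bernoulliSumPMF (I : Finset ℕ) (p : ℕ → ℝ) (k : ℤ) : ℝ :=
  if 0 ≤ k then
    ∑ S ∈ I.powersetCard k.toNat, (∏ i ∈ S, p i) * (∏ i ∈ I \ S, (1 - p i))
  else 0

lemma bsp_neg (I : Finset ℕ) (p : ℕ → ℝ) (k : ℤ) (hk : k < 0) : bernoulliSumPMF I p k = 0 := by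
  simp [bernoulliSumPMF, not_le.mpr hk]

lemma bsp_base (p : ℕ → ℝ) (k : ℤ) :
    bernoulliSumPMF (range 0) p k = if k = 0 then 1 else 0 := by
  rcases lt_trichotomy k 0 with hk | hk | hk
  · rw [bsp_neg _ _ _ hk, if_neg (by omega)]
  · subst hk
    simp [bernoulliSumPMF]
  · rw [if_neg (by omega)]
    have h0 : (∅ : Finset ℕ).powersetCard k.toNat = ∅ := by
      rw [Finset.powersetCard_eq_empty]
      simp; omega
    simp [bernoulliSumPMF, hk.le, h0]

lemma bsp_rec (m : ℕ) (p : ℕ → ℝ) (k : ℤ) :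
    bernoulliSumPMF (range (m+1)) p k
      = (1 - p m) * bernoulliSumPMF (range m) p k
        + p m * bernoulliSumPMF (range m) p (k-1) := by
  rcases lt_trichotomy k 0 with hk | hk | hk
  · rw [bsp_neg _ _ _ hk, bsp_neg _ _ _ hk, bsp_neg _ _ _ (by omega)]; ring
  · subst hk
    rw [bsp_neg _ _ (0-1) (by omega)]
    simp only [bernoulliSumPMF, le_refl, if_pos, Int.toNat_zero, Finset.powersetCard_zero,
      Finset.sum_singleton, Finset.prod_empty, Finset.sdiff_empty, one_mul, mul_zero, add_zero]
    rw [Finset.range_add_one, Finset.prod_insert Finset.notMem_range_self]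
  · have hk0 : (0:ℤ) ≤ k := hk.le
    have hk1 : (0:ℤ) ≤ k - 1 := by omega
    have hn : k.toNat = (k-1).toNat + 1 := by omega
    simp only [bernoulliSumPMF, if_pos hk0, if_pos hk1]
    rw [hn, Finset.range_add_one, Finset.powersetCard_succ_insert Finset.notMem_range_self]
    rw [Finset.sum_union]
    · congr 1
      · rw [Finset.mul_sum]
        apply Finset.sum_congr rfl
        intro S hS
        have hSsub : S ⊆ range m := (Finset.mem_powersetCard.mp hS).1
        have hmS : m ∉ S := fun h => Finset.notMem_range_self (hSsub h)
        rw [Finset.insert_sdiff_of_notMem _ hmS,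
          Finset.prod_insert (by simp)]
        ring
      · rw [Finset.sum_image, Finset.mul_sum]
        · apply Finset.sum_congr rfl
          intro T hT
          have hTsub : T ⊆ range m := (Finset.mem_powersetCard.mp hT).1
          have hmT : m ∉ T := fun h => Finset.notMem_range_self (hTsub h)
          rw [Finset.prod_insert hmT, Finset.insert_sdiff_insert,
            Finset.sdiff_insert, Finset.erase_eq_of_notMem (by simp)]
          ring
        · intro a ha b hb hab
          have hma : m ∉ a := fun h => Finset.notMem_range_self ((Finset.mem_powersetCard.mp ha).1 h)
          have hmb : m ∉ b := fun h => Finset.notMem_range_self ((Finset.mem_powersetCard.mp hb).1 h)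
          rw [← Finset.erase_insert hma, ← Finset.erase_insert hmb, hab]
    · rw [Finset.disjoint_left]
      intro S hS hS'
      have hmS : m ∉ S := fun h => Finset.notMem_range_self ((Finset.mem_powersetCard.mp hS).1 h)
      obtain ⟨T, hT, rfl⟩ := Finset.mem_image.mp hS'
      exact hmS (Finset.mem_insert_self _ _)



def GoodSeq (a : ℤ → ℝ) : Prop :=
  (∀ k, 0 ≤ a k) ∧
  (∀ j k l : ℤ, j ≤ k → k ≤ l → 0 < a j → 0 < a l → 0 < a k) ∧
  (∀ x u v y : ℤ, x + y = u + v → x ≤ u → x ≤ v → a x * a y ≤ a u * a v) ∧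
  (∀ k : ℤ, 0 ≤ a k ^ 2 * a (k+1) - 2 * a (k+1) ^ 2 * a (k-1) + a (k+2) * a k * a (k-1)) ∧
  (∀ k : ℤ, 0 ≤ a k ^ 2 * a (k-1) - 2 * a (k-1) ^ 2 * a (k+1) + a (k-2) * a k * a (k+1))

lemma goodSeq_base : GoodSeq (fun k => if k = 0 then (1:ℝ) else 0) := by
  have hn : ∀ t : ℤ, 0 ≤ (if t = 0 then (1:ℝ) else 0) := by
    intro t; split <;> norm_num
  have hprod : ∀ i j : ℤ, i ≠ j →
      (if i = 0 then (1:ℝ) else 0) * (if j = 0 then (1:ℝ) else 0) = 0 := by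
    intro i j hij
    by_cases hi : i = 0
    · rw [if_neg (by omega : ¬ j = 0), mul_zero]
    · rw [if_neg hi, zero_mul]
  refine ⟨hn, ?_, ?_, ?_, ?_⟩
  · intro j k l hjk hkl hj hl
    simp only [] at hj hl ⊢
    have hj0 : j = 0 := by
      by_contra h'; rw [if_neg h'] at hj; exact lt_irrefl _ hj
    have hl0 : l = 0 := by
      by_contra h'; rw [if_neg h'] at hl; exact lt_irrefl _ hl
    have hk0 : k = 0 := by omega
    rw [if_pos hk0]; norm_num
  · intro x u v y hsum hxu hxv
    simp only []
    by_cases hx : x = 0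
    · by_cases hy' : y = 0
      · have hu : u = 0 := by omega
        have hv : v = 0 := by omega
        rw [if_pos hx, if_pos hy', if_pos hu, if_pos hv]
      · rw [if_neg hy', mul_zero]; exact mul_nonneg (hn u) (hn v)
    · rw [if_neg hx, zero_mul]; exact mul_nonneg (hn u) (hn v)
  · intro k
    simp only []
    have p1 := hprod k (k+1) (by omega)
    have p2 := hprod (k+1) (k-1) (by omega)
    have p3 := hprod k (k-1) (by omega)
    have e0 : (if k = 0 then (1:ℝ) else 0) ^ 2 * (if k+1 = 0 then (1:ℝ) else 0)
        - 2 * (if k+1 = 0 then (1:ℝ) else 0) ^ 2 * (if k-1 = 0 then (1:ℝ) else 0)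
        + (if k+2 = 0 then (1:ℝ) else 0) * (if k = 0 then (1:ℝ) else 0)
          * (if k-1 = 0 then (1:ℝ) else 0) = 0 := by
      linear_combination (if k = 0 then (1:ℝ) else 0) * p1
        - 2 * (if k+1 = 0 then (1:ℝ) else 0) * p2
        + (if k+2 = 0 then (1:ℝ) else 0) * p3
    exact e0.ge
  · intro k
    simp only []
    have p1 := hprod k (k-1) (by omega)
    have p2 := hprod (k-1) (k+1) (by omega)
    have p3 := hprod k (k+1) (by omega)
    have e0 : (if k = 0 then (1:ℝ) else 0) ^ 2 * (if k-1 = 0 then (1:ℝ) else 0)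
        - 2 * (if k-1 = 0 then (1:ℝ) else 0) ^ 2 * (if k+1 = 0 then (1:ℝ) else 0)
        + (if k-2 = 0 then (1:ℝ) else 0) * (if k = 0 then (1:ℝ) else 0)
          * (if k+1 = 0 then (1:ℝ) else 0) = 0 := by
      linear_combination (if k = 0 then (1:ℝ) else 0) * p1
        - 2 * (if k-1 = 0 then (1:ℝ) else 0) * p2
        + (if k-2 = 0 then (1:ℝ) else 0) * p3
    exact e0.ge

lemma goodSeq_step (a a' : ℤ → ℝ) (pm : ℝ) (hpm0 : 0 ≤ pm) (hpm1 : pm ≤ 1)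
    (hrec : ∀ k, a' k = (1 - pm) * a k + pm * a (k - 1))
    (h : GoodSeq a) : GoodSeq a' := by
  obtain ⟨h1, h2, h3, h4, h5⟩ := h
  have hq : (0:ℝ) ≤ 1 - pm := by linarith
  refine ⟨?_, ?_, ?_, ?_, ?_⟩
  · intro k
    rw [hrec k]
    exact add_nonneg (mul_nonneg hq (h1 k)) (mul_nonneg hpm0 (h1 (k-1)))
  · intro j k l hjk hkl hj hl
    rcases eq_or_lt_of_le hpm0 with hpmz | hpmpos
    · have ha : ∀ t, a' t = a t := by
        intro t; rw [hrec t, ← hpmz]; ring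
      rw [ha] at hj hl ⊢
      exact h2 j k l hjk hkl hj hl
    rcases eq_or_lt_of_le hpm1 with hpmo | hpmlt
    · have ha : ∀ t, a' t = a (t - 1) := by
        intro t; rw [hrec t, hpmo]; ring
      rw [ha] at hj hl ⊢
      exact h2 (j-1) (k-1) (l-1) (by omega) (by omega) hj hl
    · by_cases hkj : k = j
      · rwa [hkj]
      by_cases hkl' : k = l
      · rwa [hkl']
      have hjd : 0 < a j ∨ 0 < a (j-1) := by
        by_contra hcon
        push_neg at hcon
        have e1 : a j = 0 := le_antisymm hcon.1 (h1 j)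
        have e2 : a (j-1) = 0 := le_antisymm hcon.2 (h1 (j-1))
        rw [hrec j, e1, e2] at hj
        norm_num at hj
      have hld : 0 < a l ∨ 0 < a (l-1) := by
        by_contra hcon
        push_neg at hcon
        have e1 : a l = 0 := le_antisymm hcon.1 (h1 l)
        have e2 : a (l-1) = 0 := le_antisymm hcon.2 (h1 (l-1))
        rw [hrec l, e1, e2] at hl
        norm_num at hl
      obtain ⟨r, hr1, hr2⟩ : ∃ r, r ≤ k - 1 ∧ 0 < a r := by
        rcases hjd with h' | h'
        exacts [⟨j, by omega, h'⟩, ⟨j-1, by omega, h'⟩]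
      obtain ⟨s, hs1, hs2⟩ : ∃ s, k - 1 ≤ s ∧ 0 < a s := by
        rcases hld with h' | h'
        exacts [⟨l, by omega, h'⟩, ⟨l-1, by omega, h'⟩]
      have hk1 : 0 < a (k-1) := h2 r (k-1) s hr1 hs1 hr2 hs2
      rw [hrec k]
      nlinarith [mul_pos hpmpos hk1, mul_nonneg hq (h1 k)]
  · intro x u v y hsum hxu hxv
    rcases eq_or_lt_of_le hxu with rfl | hxu'
    · have hyv : y = v := by omega
      subst hyv
      exact le_refl _
    rcases eq_or_lt_of_le hxv with rfl | hxv'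
    · have hyu : y = u := by omega
      subst hyu
      exact le_of_eq (mul_comm _ _)
    · have g1 := h3 x u v y hsum hxu hxv
      have g2 := h3 (x-1) (u-1) (v-1) (y-1) (by omega) (by omega) (by omega)
      have g3 := h3 (x-1) u (v-1) y (by omega) (by omega) (by omega)
      have g4 := h3 x (u-1) v (y-1) (by omega) (by omega) (by omega)
      rw [hrec x, hrec y, hrec u, hrec v]
      nlinarith [mul_nonneg (mul_nonneg hq hq) (sub_nonneg.mpr g1),
        mul_nonneg (mul_nonneg hpm0 hpm0) (sub_nonneg.mpr g2),
        mul_nonneg (mul_nonneg hq hpm0) (sub_nonneg.mpr g3),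
        mul_nonneg (mul_nonneg hq hpm0) (sub_nonneg.mpr g4)]
  · intro k
    have hb := h1 (k-2); have hc := h1 (k-1); have hd := h1 k
    have he := h1 (k+1); have hf := h1 (k+2)
    rw [hrec k, hrec (k+1), hrec (k-1), hrec (k+2)]
    simp only [show k+1-1 = k by omega, show k+2-1 = k+1 by omega,
      show k-1-1 = k-2 by omega]
    rcases (h1 k).lt_or_eq with hdpos | hd0
    · rcases (h1 (k-1)).lt_or_eq with hcpos | hc0
      · rcases (h1 (k+1)).lt_or_eq with hepos | he0
        · -- main case: a (k-1), a k, a (k+1) > 0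
          have hEm := h4 (k-1)
          simp only [show k-1+1 = k by omega, show k-1-1 = k-2 by omega,
            show k-1+2 = k+1 by omega] at hEm
          have hE0 := h4 k
          have hR0 := h5 k
          have hDp := sub_nonneg.mpr (h3 k (k+1) (k+1) (k+2) (by omega) (by omega) (by omega))
          have hMm := sub_nonneg.mpr (h3 (k-2) (k-1) k (k+1) (by omega) (by omega) (by omega))
          have hM0 := sub_nonneg.mpr (h3 (k-1) k (k+1) (k+2) (by omega) (by omega) (by omega))
          have hcepos : 0 < 2*(a (k-1)*a (k+1)) := by
            have := mul_pos hcpos hepos; linarith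
          have hX : 0 ≤ a k^3 - a (k-1)*a k*a (k+1) - 2*a (k-2)*a (k+1)^2
              + a (k-1)^2*a (k+2) + a (k-2)*a k*a (k+2) := by
            have hkey : 2*(a (k-1)*a (k+1)) * (a k^3 - a (k-1)*a k*a (k+1) - 2*a (k-2)*a (k+1)^2
                  + a (k-1)^2*a (k+2) + a (k-2)*a k*a (k+2))
                = 2*(a k*a (k+2))*(a (k-1)^2*a k - 2*a k^2*a (k-2) + a (k+1)*a (k-1)*a (k-2))
                  + 2*(a (k-1)^2*a k - 2*a k^2*a (k-2) + a (k+1)*a (k-1)*a (k-2))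
                      *(a (k+1)*a (k+1) - a k*a (k+2))
                  + (a k^2*a (k+1) - 2*a (k+1)^2*a (k-1) + a (k+2)*a k*a (k-1))
                      *(a (k-1)*a k - a (k-2)*a (k+1))
                  + 4*(a (k-2)*a (k+1))*(a k^2*a (k+1) - 2*a (k+1)^2*a (k-1) + a (k+2)*a k*a (k-1))
                  + (a k^2*a (k-1) - 2*a (k-1)^2*a (k+1) + a (k-2)*a k*a (k+1))
                      *(a k*a (k+1) - a (k-1)*a (k+2)) := by ring
            have t1 := mul_nonneg (mul_nonneg (by norm_num : (0:ℝ) ≤ 2) (mul_nonneg hd hf)) hEm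
            have t2 := mul_nonneg (mul_nonneg (by norm_num : (0:ℝ) ≤ 2) hEm) hDp
            have t3 := mul_nonneg hE0 hMm
            have t4 := mul_nonneg (mul_nonneg (by norm_num : (0:ℝ) ≤ 4) (mul_nonneg hb he)) hE0
            have t5 := mul_nonneg hR0 hM0
            by_contra hneg
            push_neg at hneg
            have hcontra := mul_pos hcepos (neg_pos.mpr hneg)
            linarith [hkey, t1, t2, t3, t4, t5, hcontra]
          have hY : 0 ≤ 2*a (k-1)^2*a (k+1) - 3*a (k-2)*a k*a (k+1)
              + a (k-2)*a (k-1)*a (k+2) := by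
            have hkey : a k * (2*a (k-1)^2*a (k+1) - 3*a (k-2)*a k*a (k+1)
                  + a (k-2)*a (k-1)*a (k+2))
                = 2*a (k+1)*(a (k-1)^2*a k - 2*a k^2*a (k-2) + a (k+1)*a (k-1)*a (k-2))
                  + a (k-2)*(a k^2*a (k+1) - 2*a (k+1)^2*a (k-1) + a (k+2)*a k*a (k-1)) := by ring
            have t1 := mul_nonneg (mul_nonneg (by norm_num : (0:ℝ) ≤ 2) he) hEm
            have t2 := mul_nonneg hb hE0
            by_contra hneg
            push_neg at hneg
            have hcontra := mul_pos hdpos (neg_pos.mpr hneg)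
            linarith [hkey, t1, t2, hcontra]
          have s1 := mul_nonneg (pow_nonneg hq 3) hE0
          have s2 := mul_nonneg (mul_nonneg (pow_nonneg hq 2) hpm0) hX
          have s3 := mul_nonneg (mul_nonneg hq (pow_nonneg hpm0 2)) hY
          have s4 := mul_nonneg (pow_nonneg hpm0 3) hEm
          linarith [s1, s2, s3, s4]
        · -- a (k+1) = 0, a k > 0, a (k-1) > 0
          have hf0 : a (k+2) = 0 := by
            by_contra h'
            have hfpos : 0 < a (k+2) := (h1 (k+2)).lt_of_ne (Ne.symm h')
            have hcon := h2 k (k+1) (k+2) (by omega) (by omega) hdpos hfpos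
            rw [← he0] at hcon; exact lt_irrefl _ hcon
          have hEm := h4 (k-1)
          simp only [show k-1+1 = k by omega, show k-1-1 = k-2 by omega,
            show k-1+2 = k+1 by omega] at hEm
          rw [← he0] at hEm
          rw [← he0, hf0]
          have s1 := mul_nonneg (mul_nonneg hpm0 (mul_nonneg hq hq))
            (mul_nonneg (mul_nonneg hd hd) hd)
          have s2 := mul_nonneg (mul_nonneg (mul_nonneg hpm0 hpm0) hpm0) hEm
          linarith [s1, s2]
      · -- a (k-1) = 0, a k > 0
        have hb0 : a (k-2) = 0 := by
          by_contra h'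
          have hbpos : 0 < a (k-2) := (h1 (k-2)).lt_of_ne (Ne.symm h')
          have hcon := h2 (k-2) (k-1) k (by omega) (by omega) hbpos hdpos
          rw [← hc0] at hcon; exact lt_irrefl _ hcon
        rw [← hc0, hb0]
        have s1 := mul_nonneg (sq_nonneg ((1-pm)*a k + pm*0))
          (add_nonneg (mul_nonneg hq he) (mul_nonneg hpm0 hd))
        linarith [s1]
    · -- a k = 0
      have hce : a (k-1) = 0 ∨ a (k+1) = 0 := by
        by_contra hcon
        push_neg at hcon
        have hcpos : 0 < a (k-1) := (h1 (k-1)).lt_of_ne (Ne.symm hcon.1)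
        have hepos : 0 < a (k+1) := (h1 (k+1)).lt_of_ne (Ne.symm hcon.2)
        have hcon2 := h2 (k-1) k (k+1) (by omega) (by omega) hcpos hepos
        rw [← hd0] at hcon2; exact lt_irrefl _ hcon2
      rcases hce with hc0 | he0
      · rcases (h1 (k-2)).lt_or_eq with hbpos | hb0
        · rcases (h1 (k+1)).lt_or_eq with hepos | he0
          · exfalso
            have hcon := h2 (k-2) (k-1) (k+1) (by omega) (by omega) hbpos hepos
            rw [hc0] at hcon; exact lt_irrefl _ hcon
          · rw [← hd0, hc0, ← he0]; linarith []
        · rw [← hd0, hc0, ← hb0]; linarith []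
      · rcases (h1 (k+2)).lt_or_eq with hfpos | hf0
        · rcases (h1 (k-1)).lt_or_eq with hcpos | hc0
          · exfalso
            have hcon := h2 (k-1) (k+1) (k+2) (by omega) (by omega) hcpos hfpos
            rw [he0] at hcon; exact lt_irrefl _ hcon
          · rw [← hd0, he0, ← hc0]; linarith []
        · rw [← hd0, he0, ← hf0]; linarith []
  · intro k
    have hb := h1 (k-3); have hc := h1 (k-2); have hd := h1 (k-1)
    have he := h1 k; have hf := h1 (k+1)
    rw [hrec k, hrec (k-1), hrec (k+1), hrec (k-2)]
    simp only [show k-1-1 = k-2 by omega, show k+1-1 = k by omega,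
      show k-2-1 = k-3 by omega]
    rcases (h1 (k-1)).lt_or_eq with hdpos | hd0
    · rcases (h1 k).lt_or_eq with hepos | he0
      · rcases (h1 (k-2)).lt_or_eq with hcpos | hc0
        · -- main case: a (k-2), a (k-1), a k > 0
          have hR1 := h5 k
          have hR0 := h5 (k-1)
          simp only [show k-1-1 = k-2 by omega, show k-1+1 = k by omega,
            show k-1-2 = k-3 by omega] at hR0
          have hEm := h4 (k-2)
          simp only [show k-2+1 = k-1 by omega, show k-2-1 = k-3 by omega,
            show k-2+2 = k by omega] at hEm
          have hDp := sub_nonneg.mpr (h3 (k-1) k k (k+1) (by omega) (by omega) (by omega))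
          have hM0 := sub_nonneg.mpr (h3 (k-2) (k-1) k (k+1) (by omega) (by omega) (by omega))
          have hXt : 0 ≤ 2*a (k-2)*a k^2 - 3*a (k-2)*a (k-1)*a (k+1)
              + a (k-3)*a k*a (k+1) := by
            have hkey : a (k-1) * (2*a (k-2)*a k^2 - 3*a (k-2)*a (k-1)*a (k+1)
                  + a (k-3)*a k*a (k+1))
                = a (k+1)*(a (k-1)^2*a (k-2) - 2*a (k-2)^2*a k + a (k-3)*a (k-1)*a k)
                  + 2*a (k-2)*(a k^2*a (k-1) - 2*a (k-1)^2*a (k+1) + a (k-2)*a k*a (k+1)) := by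
              ring
            have t1 := mul_nonneg hf hR0
            have t2 := mul_nonneg (mul_nonneg (by norm_num : (0:ℝ) ≤ 2) hc) hR1
            by_contra hneg
            push_neg at hneg
            have hcontra := mul_pos hdpos (neg_pos.mpr hneg)
            linarith [hkey, t1, t2, hcontra]
          have hYt : 0 ≤ a (k-1)^3 - a (k-2)*a (k-1)*a k - 2*a (k-2)^2*a (k+1)
              + a (k-3)*a k^2 + a (k-3)*a (k-1)*a (k+1) := by
            have hkey : (a (k-2)*a k) * (a (k-1)^3 - a (k-2)*a (k-1)*a k - 2*a (k-2)^2*a (k+1)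
                  + a (k-3)*a k^2 + a (k-3)*a (k-1)*a (k+1))
                = (a (k-3)*a (k-1))*(a k^2*a (k-1) - 2*a (k-1)^2*a (k+1) + a (k-2)*a k*a (k+1))
                  + 2*(a (k-2)*a (k+1))
                      *(a (k-1)^2*a (k-2) - 2*a (k-2)^2*a k + a (k-3)*a (k-1)*a k)
                  + (a (k-2)^2*a (k-1) - 2*a (k-1)^2*a (k-3) + a k*a (k-2)*a (k-3))
                      *(a k*a k - a (k-1)*a (k+1))
                  + (a (k-1)^2*a (k-2) - 2*a (k-2)^2*a k + a (k-3)*a (k-1)*a k)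
                      *(a (k-1)*a k - a (k-2)*a (k+1)) := by ring
            have t1 := mul_nonneg (mul_nonneg hb hd) hR1
            have t2 := mul_nonneg (mul_nonneg (by norm_num : (0:ℝ) ≤ 2) (mul_nonneg hc hf)) hR0
            have t3 := mul_nonneg hEm hDp
            have t4 := mul_nonneg hR0 hM0
            have hcepos : 0 < a (k-2) * a k := mul_pos hcpos hepos
            by_contra hneg
            push_neg at hneg
            have hcontra := mul_pos hcepos (neg_pos.mpr hneg)
            linarith [hkey, t1, t2, t3, t4, hcontra]
          have s1 := mul_nonneg (pow_nonneg hq 3) hR1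
          have s2 := mul_nonneg (mul_nonneg (pow_nonneg hq 2) hpm0) hXt
          have s3 := mul_nonneg (mul_nonneg hq (pow_nonneg hpm0 2)) hYt
          have s4 := mul_nonneg (pow_nonneg hpm0 3) hR0
          linarith [s1, s2, s3, s4]
        · -- a (k-2) = 0, a (k-1) > 0, a k > 0
          have hb0 : a (k-3) = 0 := by
            by_contra h'
            have hbpos : 0 < a (k-3) := (h1 (k-3)).lt_of_ne (Ne.symm h')
            have hcon := h2 (k-3) (k-2) (k-1) (by omega) (by omega) hbpos hdpos
            rw [← hc0] at hcon; exact lt_irrefl _ hcon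
          have hR1 := h5 k
          rw [← hc0] at hR1
          rw [← hc0, hb0]
          have s1 := mul_nonneg (pow_nonneg hq 3) hR1
          have s2 := mul_nonneg (mul_nonneg hq (pow_nonneg hpm0 2))
            (mul_nonneg (mul_nonneg hd hd) hd)
          linarith [s1, s2]
      · -- a k = 0, a (k-1) > 0
        have hf0 : a (k+1) = 0 := by
          by_contra h'
          have hfpos : 0 < a (k+1) := (h1 (k+1)).lt_of_ne (Ne.symm h')
          have hcon := h2 (k-1) k (k+1) (by omega) (by omega) hdpos hfpos
          rw [← he0] at hcon; exact lt_irrefl _ hcon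
        rw [← he0, hf0]
        have s1 := mul_nonneg (sq_nonneg ((1-pm)*0 + pm*a (k-1)))
          (add_nonneg (mul_nonneg hq hd) (mul_nonneg hpm0 hc))
        linarith [s1]
    · -- a (k-1) = 0
      have hce : a (k-2) = 0 ∨ a k = 0 := by
        by_contra hcon
        push_neg at hcon
        have hcpos : 0 < a (k-2) := (h1 (k-2)).lt_of_ne (Ne.symm hcon.1)
        have hepos : 0 < a k := (h1 k).lt_of_ne (Ne.symm hcon.2)
        have hcon2 := h2 (k-2) (k-1) k (by omega) (by omega) hcpos hepos
        rw [← hd0] at hcon2; exact lt_irrefl _ hcon2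
      rcases hce with hc0 | he0
      · rcases (h1 (k-3)).lt_or_eq with hbpos | hb0
        · rcases (h1 k).lt_or_eq with hepos | he0
          · exfalso
            have hcon := h2 (k-3) (k-2) k (by omega) (by omega) hbpos hepos
            rw [hc0] at hcon; exact lt_irrefl _ hcon
          · rw [← hd0, hc0, ← he0]; linarith []
        · rw [← hd0, hc0, ← hb0]; linarith []
      · rcases (h1 (k-2)).lt_or_eq with hcpos | hc0
        · rcases (h1 (k+1)).lt_or_eq with hfpos | hf0
          · exfalso
            have hcon := h2 (k-2) (k-1) (k+1) (by omega) (by omega) hcpos hfpos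
            rw [← hd0] at hcon; exact lt_irrefl _ hcon
          · rw [← hd0, he0, ← hf0]; linarith []
        · rw [← hd0, he0, ← hc0]; linarith []


lemma bsp_bundle (m : ℕ) (p : ℕ → ℝ) (hp : ∀ i ∈ Finset.range m, 0 ≤ p i ∧ p i ≤ 1) :
    GoodSeq (bernoulliSumPMF (Finset.range m) p) := by
  induction m with
  | zero =>
    have hfun : bernoulliSumPMF (Finset.range 0) p = fun k => if k = 0 then (1:ℝ) else 0 :=
      funext (bsp_base p)
    rw [hfun]
    exact goodSeq_base
  | succ n ih =>
    have hpn := hp n (by simp)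
    exact goodSeq_step (bernoulliSumPMF (Finset.range n) p) _ (p n) hpn.1 hpn.2
      (fun k => bsp_rec n p k)
      (ih (fun i hi => hp i (by simp only [Finset.mem_range] at hi ⊢; omega)))

theorem bernoulli_sum_cubic_C1bar (m : ℕ) (p : ℕ → ℝ)
    (hp : ∀ i ∈ Finset.range m, 0 ≤ p i ∧ p i ≤ 1)
    (g : ℤ → ℝ) (hg : ∀ k, g k = bernoulliSumPMF (Finset.range m) p k) (k : ℤ) :
    0 ≤ g k ^ 2 * g (k + 1) - 2 * g (k + 1) ^ 2 * g (k - 1) + g (k + 2) * g k * g (k - 1) := by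
  have h := (bsp_bundle m p hp).2.2.2.1 k
  simp only [hg]
  exact h
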